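/- Let G be an undirected graph and let s_1,t_1,s_2,t_2 be four distinct vertices with {s_1,t_1} and {s_2,t_2} nonadjacent vertex pairs (no edge between the two sets). Then G contains two mutually induced paths P_1 (from s_1 to t_1) and P_2 (from s_2 to t_2) if and only if G has a safe {s_1,t_1},{s_2,t_2}-separator. -/

import Mathlib

variable {V : Type*}

/-- Reachability in `G` by a walk avoiding the vertex set `S`. -/
def ReachAvoid (G : SimpleGraph V) (S : Set V) (u v : V) : Prop :=
  ∃ w : G.Walk u v, ∀ x ∈ w.support, x ∉ S

/-- The connected component of `G − S` containing `s`, as a subset of `V`. -/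
def compOf (G : SimpleGraph V) (S : Set V) (s : V) : Set V :=
  {v | ReachAvoid G S s v}

/-- `S` is an `s,t`-separator of `G`. -/
def IsSep (G : SimpleGraph V) (s t : V) (S : Set V) : Prop :=
  s ∉ S ∧ t ∉ S ∧ ¬ ReachAvoid G S s t

/-- `S` is a minimal `s,t`-separator of `G`. -/
def IsMinSep (G : SimpleGraph V) (s t : V) (S : Set V) : Prop :=
  IsSep G s t S ∧ ∀ S' ⊂ S, ¬ IsSep G s t S'

/-- The open neighborhood of a vertex set `X`. -/
def nbhd (G : SimpleGraph V) (X : Set V) : Set V :=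
  {v | v ∉ X ∧ ∃ x ∈ X, G.Adj x v}

/-- The closed neighborhood of a vertex `v`. -/
def clNbhd (G : SimpleGraph V) (v : V) : Set V :=
  insert v (G.neighborSet v)

/-- `S` is a minimal `s,t`-separator close to `sA`. -/
def CloseTo (G : SimpleGraph V) (s t : V) (A : Set V) (S : Set V) : Prop :=
  IsMinSep G s t S ∧ A ⊆ compOf G S s ∧
    ∀ T, IsMinSep G s t T → T ≠ S → A ⊆ compOf G T s →
      ¬ compOf G T s ⊆ compOf G S s

/-- `G` contains no asteroidal triple. -/
def IsATFree (G : SimpleGraph V) : Prop :=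
  ¬ ∃ a b c : V, a ≠ b ∧ a ≠ c ∧ b ≠ c ∧
    ¬ G.Adj a b ∧ ¬ G.Adj a c ∧ ¬ G.Adj b c ∧
    (∃ w : G.Walk a b, ∀ x ∈ w.support, x ∉ clNbhd G c) ∧
    (∃ w : G.Walk a c, ∀ x ∈ w.support, x ∉ clNbhd G b) ∧
    (∃ w : G.Walk b c, ∀ x ∈ w.support, x ∉ clNbhd G a)

/-- `S` is an `A,B`-separator. -/
def IsABSep (G : SimpleGraph V) (A B : Set V) (S : Set V) : Prop :=
  S ⊆ (A ∪ B)ᶜ ∧ ∀ a ∈ A, ∀ b ∈ B, ¬ ReachAvoid G S a b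

/-- `S` is a minimal `A,B`-separator. -/
def IsMinABSep (G : SimpleGraph V) (A B S : Set V) : Prop :=
  IsABSep G A B S ∧ ∀ S' ⊂ S, ¬ IsABSep G A B S'

/-- `S` is a safe (connectivity-preserving) `A,B`-separator: removing `S`
leaves two distinct components, one containing `A` and one containing `B`. -/
def IsSafeSep (G : SimpleGraph V) (A B S : Set V) : Prop :=
  S ⊆ (A ∪ B)ᶜ ∧ ∃ a b : V, a ∉ S ∧ b ∉ S ∧
    A ⊆ compOf G S a ∧ B ⊆ compOf G S b ∧
    Disjoint (compOf G S a) (compOf G S b)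

/-- The induced subgraph on `X` is connected (any two vertices of `X` are joined
by a walk staying in `X`). -/
def ConnIn (G : SimpleGraph V) (X : Set V) : Prop :=
  ∀ x ∈ X, ∀ y ∈ X, ∃ w : G.Walk x y, ∀ z ∈ w.support, z ∈ X

/-- The graph obtained from `G` by contracting `{s} ∪ A` to the vertex `s`
(the vertices of `A` become isolated). -/
def contractGraph (G : SimpleGraph V) (s : V) (A : Set V) : SimpleGraph V where
  Adj u v := u ∉ A ∧ v ∉ A ∧ u ≠ v ∧
    (G.Adj u v ∨ (u = s ∧ ∃ a ∈ A, G.Adj a v) ∨ (v = s ∧ ∃ a ∈ A, G.Adj a u))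
  symm := by
    constructor
    rintro u v ⟨hu, hv, hne, h⟩
    refine ⟨hv, hu, hne.symm, ?_⟩
    rcases h with h | h | h
    · exact Or.inl h.symm
    · exact Or.inr (Or.inr h)
    · exact Or.inr (Or.inl h)
  loopless := by
    constructor
    rintro u ⟨_, _, hne, _⟩
    exact hne rfl

/-- The graph obtained from `G` by adding all edges from `s` to `N_G[A]`. -/
def addApex (G : SimpleGraph V) (s : V) (A : Set V) : SimpleGraph V where
  Adj u v := G.Adj u v ∨
    (u = s ∧ v ≠ s ∧ v ∈ A ∪ nbhd G A) ∨
    (v = s ∧ u ≠ s ∧ u ∈ A ∪ nbhd G A)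
  symm := by
    constructor
    rintro u v (h | h | h)
    · exact Or.inl h.symm
    · exact Or.inr (Or.inr h)
    · exact Or.inr (Or.inl h)
  loopless := by
    constructor
    rintro u (h | ⟨h1, h2, _⟩ | ⟨h1, h2, _⟩)
    · exact G.loopless.irrefl u h
    · exact h2 h1
    · exact h2 h1

/-- The graph obtained from `G` by subdividing every edge. -/
def subdiv (G : SimpleGraph V) : SimpleGraph (V ⊕ G.edgeSet) where
  Adj x y :=
    match x, y with
    | Sum.inl u, Sum.inr e => u ∈ (e : Sym2 V)
    | Sum.inr e, Sum.inl u => u ∈ (e : Sym2 V)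
    | _, _ => False
  symm := by
    constructor
    rintro (u | e) (v | f) h <;> exact h
  loopless := by
    constructor
    rintro (u | e) h <;> exact h

/-- The instance `2Dis(G,A,B)` of 2-Disjoint-Connected-Subgraphs has a solution. -/
def TwoDisSolvable (G : SimpleGraph V) (A B : Set V) : Prop :=
  ∃ A₁ B₁ : Set V, Disjoint A₁ B₁ ∧ A ⊆ A₁ ∧ B ⊆ B₁ ∧
    ConnIn G A₁ ∧ ConnIn G B₁

lemma reachAvoid_notMem_right {G : SimpleGraph V} {S : Set V} {u v : V}
    (h : ReachAvoid G S u v) : v ∉ S := by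
  obtain ⟨w, hw⟩ := h; exact hw v w.end_mem_support

lemma reachAvoid_refl {G : SimpleGraph V} {S : Set V} {u : V} (h : u ∉ S) :
    ReachAvoid G S u u :=
  ⟨SimpleGraph.Walk.nil, by simp [h]⟩

lemma reachAvoid_symm {G : SimpleGraph V} {S : Set V} {u v : V}
    (h : ReachAvoid G S u v) : ReachAvoid G S v u := by
  obtain ⟨w, hw⟩ := h
  exact ⟨w.reverse, by simpa using hw⟩

lemma reachAvoid_trans {G : SimpleGraph V} {S : Set V} {u v w : V}
    (h1 : ReachAvoid G S u v) (h2 : ReachAvoid G S v w) : ReachAvoid G S u w := by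
  obtain ⟨p, hp⟩ := h1; obtain ⟨q, hq⟩ := h2
  refine ⟨p.append q, fun x hx => ?_⟩
  rw [SimpleGraph.Walk.mem_support_append_iff] at hx
  exact hx.elim (hp x) (hq x)

lemma reachAvoid_adj {G : SimpleGraph V} {S : Set V} {u v w : V}
    (h : ReachAvoid G S u v) (hadj : G.Adj v w) (hw : w ∉ S) : ReachAvoid G S u w :=
  reachAvoid_trans h ⟨SimpleGraph.Walk.cons hadj SimpleGraph.Walk.nil, by
    intro x hx; simp at hx
    rcases hx with rfl | rfl
    · exact reachAvoid_notMem_right h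
    · exact hw⟩

lemma walk_ind {G : SimpleGraph V} {S P : Set V}
    (hstep : ∀ x y, x ∈ P → G.Adj x y → y ∉ S → y ∈ P) :
    ∀ {u v : V} (w : G.Walk u v), (∀ x ∈ w.support, x ∉ S) → u ∈ P → v ∈ P := by
  intro u v w
  induction w with
  | nil => exact fun _ hu => hu
  | cons h p ih =>
    intro hw hu
    refine ih (fun x hx => hw x (by simp [hx])) ?_
    exact hstep _ _ hu h (hw _ (by simp))

lemma reachAvoid_of_mem_support {G : SimpleGraph V} {S : Set V} {u v x : V}
    (w : G.Walk u v) (hw : ∀ y ∈ w.support, y ∉ S) (hx : x ∈ w.support) :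
    ReachAvoid G S u x := by
  classical
  exact ⟨w.takeUntil x hx, fun y hy => hw y (w.support_takeUntil_subset hx hy)⟩

theorem stmt18 (G : SimpleGraph V) (s₁ t₁ s₂ t₂ : V)
    (hdist : s₁ ≠ t₁ ∧ s₁ ≠ s₂ ∧ s₁ ≠ t₂ ∧ t₁ ≠ s₂ ∧ t₁ ≠ t₂ ∧ s₂ ≠ t₂)
    (hnadj : ∀ x ∈ ({s₁, t₁} : Set V), ∀ y ∈ ({s₂, t₂} : Set V), ¬ G.Adj x y) :
    (∃ (P₁ : G.Walk s₁ t₁) (P₂ : G.Walk s₂ t₂), P₁.IsPath ∧ P₂.IsPath ∧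
        ∀ x ∈ P₁.support, ∀ y ∈ P₂.support, x ≠ y ∧ ¬ G.Adj x y) ↔
      ∃ S : Set V, IsSafeSep G {s₁, t₁} {s₂, t₂} S := by
  classical
  constructor
  · rintro ⟨P₁, P₂, hp₁, hp₂, hmut⟩
    set X : Set V := {v | v ∈ P₁.support} with hXdef
    set Y : Set V := {v | v ∈ P₂.support} with hYdef
    have hs₁X : s₁ ∈ X := P₁.start_mem_support
    have ht₁X : t₁ ∈ X := P₁.end_mem_support
    have hs₂Y : s₂ ∈ Y := P₂.start_mem_support
    have ht₂Y : t₂ ∈ Y := P₂.end_mem_support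
    set N : Set V := nbhd G X with hNdef
    have hYX : ∀ y ∈ Y, y ∉ X := fun y hy hyX => (hmut y hyX y hy).1 rfl
    have hYN : ∀ y ∈ Y, y ∉ N := by
      rintro y hy ⟨hyX, x, hxX, hadj⟩
      exact (hmut x hxX y hy).2 hadj
    set C : Set V := compOf G N s₂ with hCdef
    have hYC : Y ⊆ C := fun y hy =>
      reachAvoid_of_mem_support P₂ (fun z hz => hYN z hz) hy
    have hCX : ∀ v ∈ C, v ∉ X := by
      intro v hv
      obtain ⟨w, hw⟩ := hv
      refine (walk_ind (P := {z : V | z ∉ X ∧ z ∉ N}) ?_ w hw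
        ⟨hYX s₂ hs₂Y, hYN s₂ hs₂Y⟩).1
      intro x y hx hadj hyN
      refine ⟨fun hyX => hx.2 ⟨hx.1, y, hyX, hadj.symm⟩, hyN⟩
    set S : Set V := nbhd G C with hSdef
    have hSX : ∀ v ∈ S, v ∉ X := by
      rintro v ⟨hvC, c, hcC, hadj⟩ hvX
      have hcN : c ∉ N := reachAvoid_notMem_right hcC
      exact hcN ⟨hCX c hcC, v, hvX, hadj.symm⟩
    have hSY : ∀ v ∈ S, v ∉ Y := fun v hv hvY => hv.1 (hYC hvY)
    have hs₁S : s₁ ∉ S := fun h => hSX s₁ h hs₁X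
    have hs₂S : s₂ ∉ S := fun h => hSY s₂ h hs₂Y
    have hA : ({s₁, t₁} : Set V) ⊆ compOf G S s₁ := by
      rintro x (rfl | rfl)
      · exact reachAvoid_refl hs₁S
      · exact ⟨P₁, fun z hz hzS => hSX z hzS hz⟩
    have hB : ({s₂, t₂} : Set V) ⊆ compOf G S s₂ := by
      rintro x (rfl | rfl)
      · exact reachAvoid_refl hs₂S
      · exact ⟨P₂, fun z hz hzS => hSY z hzS hz⟩
    have h2C : compOf G S s₂ ⊆ C := by
      intro v hv
      obtain ⟨w, hw⟩ := hv
      refine walk_ind (P := C) ?_ w hw (hYC hs₂Y)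
      intro x y hx hadj hyS
      by_contra hyC
      exact hyS ⟨hyC, x, hx, hadj⟩
    have h1C : ∀ v ∈ compOf G S s₁, v ∉ C := by
      intro v hv
      obtain ⟨w, hw⟩ := hv
      refine (walk_ind (P := {z : V | z ∉ C ∧ z ∉ S}) ?_ w hw
        ⟨fun h => hCX s₁ h hs₁X, hs₁S⟩).1
      intro x y hx hadj hyS
      exact ⟨fun hyC => hx.2 ⟨hx.1, y, hyC, hadj.symm⟩, hyS⟩
    refine ⟨S, ?_, s₁, s₂, hs₁S, hs₂S, hA, hB, ?_⟩
    · rintro v hv (h | h)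
      · rcases h with rfl | rfl
        · exact hSX v hv hs₁X
        · exact hSX v hv ht₁X
      · rcases h with rfl | rfl
        · exact hSY v hv hs₂Y
        · exact hSY v hv ht₂Y
    · rw [Set.disjoint_left]
      intro v hv1 hv2
      exact h1C v hv1 (h2C hv2)
  · rintro ⟨S, hsub, a, b, haS, hbS, hA, hB, hdisj⟩
    have hs₁ : ReachAvoid G S a s₁ := hA (Set.mem_insert _ _)
    have ht₁ : ReachAvoid G S a t₁ := hA (by simp)
    have hs₂ : ReachAvoid G S b s₂ := hB (Set.mem_insert _ _)
    have ht₂ : ReachAvoid G S b t₂ := hB (by simp)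
    obtain ⟨w₁, hw₁⟩ := reachAvoid_trans (reachAvoid_symm hs₁) ht₁
    obtain ⟨w₂, hw₂⟩ := reachAvoid_trans (reachAvoid_symm hs₂) ht₂
    have hp₁S : ∀ x ∈ (w₁.toPath : G.Walk s₁ t₁).support, x ∉ S :=
      fun x hx => hw₁ x (w₁.support_toPath_subset hx)
    have hp₂S : ∀ x ∈ (w₂.toPath : G.Walk s₂ t₂).support, x ∉ S :=
      fun x hx => hw₂ x (w₂.support_toPath_subset hx)
    refine ⟨w₁.toPath, w₂.toPath, w₁.toPath.2, w₂.toPath.2, ?_⟩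
    intro x hx y hy
    have hxa : x ∈ compOf G S a :=
      reachAvoid_trans hs₁ (reachAvoid_of_mem_support _ hp₁S hx)
    have hyb : y ∈ compOf G S b :=
      reachAvoid_trans hs₂ (reachAvoid_of_mem_support _ hp₂S hy)
    constructor
    · rintro rfl
      exact (Set.disjoint_left.mp hdisj hxa) hyb
    · intro hadj
      have hya : y ∈ compOf G S a :=
        reachAvoid_adj hxa hadj (reachAvoid_notMem_right hyb)
      exact (Set.disjoint_left.mp hdisj hya) hyb
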